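/- Assume w is exponentially bounded. Then for every rho in (0,infinity)^2 the supremum s(rho) = sup over mu in D_mu of (rho·mu - p(mu)) is finite and is attained at a unique point Mbar(rho) in D_mu. Moreover, if rho lies in D_rho = R(D_mu), then R(Mbar(rho)) = rho. -/

import Mathlib

open Real Set Filter Topology

noncomputable section

/-- Euclidean norm `|k|` of a pair of naturals. -/
def knorm (k : ℕ × ℕ) : ℝ := Real.sqrt ((k.1 : ℝ) ^ 2 + (k.2 : ℝ) ^ 2)

/-- Dot product `μ·k` of a chemical potential with an occupation vector. -/
def dotNat (μ : ℝ × ℝ) (k : ℕ × ℕ) : ℝ := μ.1 * k.1 + μ.2 * k.2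

/-- Summand `w(k) exp(μ·k)` of the grand-canonical partition function. -/
def zsummand (w : ℕ × ℕ → ℝ) (μ : ℝ × ℝ) (k : ℕ × ℕ) : ℝ := w k * Real.exp (dotNat μ k)

/-- `dom z`: the set of `μ` where `z(μ) = ∑_k w(k) exp(μ·k)` is finite. -/
def domz (w : ℕ × ℕ → ℝ) : Set (ℝ × ℝ) := {μ | Summable (zsummand w μ)}

/-- `D_μ`: the set of `μ` where `∑_k k_i w(k) exp(μ·k)` is finite for `i = 1,2`. -/
def Dmu (w : ℕ × ℕ → ℝ) : Set (ℝ × ℝ) :=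
  {μ | Summable (fun k : ℕ × ℕ => (k.1 : ℝ) * zsummand w μ k) ∧
       Summable (fun k : ℕ × ℕ => (k.2 : ℝ) * zsummand w μ k)}

/-- `w` is exponentially bounded: `w(k) ≤ ξ^|k|` for some `ξ > 0`. -/
def ExpBounded (w : ℕ × ℕ → ℝ) : Prop := ∃ ξ : ℝ, 0 < ξ ∧ ∀ k : ℕ × ℕ, w k ≤ ξ ^ knorm k

/-- The grand-canonical partition function `z(μ)`. -/
def zfun (w : ℕ × ℕ → ℝ) (μ : ℝ × ℝ) : ℝ := ∑' k : ℕ × ℕ, zsummand w μ k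

/-- The pressure `p(μ) = log z(μ)`. -/
def press (w : ℕ × ℕ → ℝ) (μ : ℝ × ℝ) : ℝ := Real.log (zfun w μ)

/-- The single-site grand-canonical mass function `ν¹_μ(k) = w(k) exp(μ·k)/z(μ)`. -/
def nu1 (w : ℕ × ℕ → ℝ) (μ : ℝ × ℝ) (k : ℕ × ℕ) : ℝ := zsummand w μ k / zfun w μ

/-- Density of the first species `R₁(μ)`. -/
def R1 (w : ℕ × ℕ → ℝ) (μ : ℝ × ℝ) : ℝ := ∑' k : ℕ × ℕ, (k.1 : ℝ) * nu1 w μ k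

/-- Density of the second species `R₂(μ)`. -/
def R2 (w : ℕ × ℕ → ℝ) (μ : ℝ × ℝ) : ℝ := ∑' k : ℕ × ℕ, (k.2 : ℝ) * nu1 w μ k

/-- The density map `R(μ) = (R₁(μ), R₂(μ))`. -/
def Rmap (w : ℕ × ℕ → ℝ) (μ : ℝ × ℝ) : ℝ × ℝ := (R1 w μ, R2 w μ)

/-- Dot product of two real vectors. -/
def dotR (a b : ℝ × ℝ) : ℝ := a.1 * b.1 + a.2 * b.2

section Aux
variable {w : ℕ × ℕ → ℝ}

lemma zs_pos (hw : ∀ k, 0 < w k) (μ : ℝ × ℝ) (k : ℕ × ℕ) : 0 < zsummand w μ k :=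
  mul_pos (hw k) (Real.exp_pos _)

lemma zs_nonneg (hw : ∀ k, 0 < w k) (μ : ℝ × ℝ) (k : ℕ × ℕ) : 0 ≤ zsummand w μ k :=
  (zs_pos hw μ k).le

lemma le_zfun (hw : ∀ k, 0 < w k) {μ : ℝ × ℝ} (hs : Summable (zsummand w μ)) (k0 : ℕ × ℕ) :
    zsummand w μ k0 ≤ zfun w μ :=
  Summable.le_tsum hs k0 (fun j _ => zs_nonneg hw μ j)

lemma zfun_pos (hw : ∀ k, 0 < w k) {μ : ℝ × ℝ} (hs : Summable (zsummand w μ)) :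
    0 < zfun w μ :=
  lt_of_lt_of_le (zs_pos hw μ (0,0)) (le_zfun hw hs (0,0))

lemma press_ge (hw : ∀ k, 0 < w k) {μ : ℝ × ℝ} (hs : Summable (zsummand w μ)) (k0 : ℕ × ℕ) :
    dotNat μ k0 + Real.log (w k0) ≤ press w μ := by
  have h := Real.log_le_log (zs_pos hw μ k0) (le_zfun hw hs k0)
  rwa [zsummand, Real.log_mul (hw k0).ne' (Real.exp_pos _).ne', Real.log_exp, add_comm] at h

lemma summable_zs_of_mem_Dmu (hw : ∀ k, 0 < w k) {μ : ℝ × ℝ} (hμ : μ ∈ Dmu w) :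
    Summable (zsummand w μ) := by
  obtain ⟨hμ1, hμ2⟩ := hμ
  have hg : Summable (fun k : ℕ × ℕ =>
      ((k.1 : ℝ) * zsummand w μ k + (k.2 : ℝ) * zsummand w μ k)
        + (if k = 0 then zsummand w μ k else 0)) := by
    refine (hμ1.add hμ2).add (summable_of_ne_finset_zero (s := {0}) ?_)
    intro k hk
    simp only [Finset.mem_singleton] at hk
    simp [hk]
  refine Summable.of_nonneg_of_le (fun k => zs_nonneg hw μ k) (fun k => ?_) hg
  by_cases hk : k = 0
  · simp only [hk, if_pos]
    nlinarith [zs_nonneg hw μ (0 : ℕ × ℕ)]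
  · simp only [hk, if_neg, not_false_iff, add_zero]
    have h1 : (1 : ℝ) ≤ (k.1 : ℝ) + k.2 := by
      have : 1 ≤ k.1 + k.2 := by
        rcases Nat.eq_zero_or_pos (k.1 + k.2) with h | h
        · exact absurd (Prod.ext (Nat.add_eq_zero.mp h).1 (Nat.add_eq_zero.mp h).2) hk
        · exact h
      exact_mod_cast this
    nlinarith [zs_nonneg hw μ k]

lemma dotNat_shift (μ : ℝ × ℝ) (t : ℝ) (k : ℕ × ℕ) :
    dotNat (μ.1 - t, μ.2 - t) k = dotNat μ k - t * ((k.1 : ℝ) + k.2) := by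
  simp [dotNat]; ring

lemma zs_shift (μ : ℝ × ℝ) (t : ℝ) (k : ℕ × ℕ) :
    zsummand w (μ.1 - t, μ.2 - t) k
      = Real.exp (-(t * ((k.1 : ℝ) + k.2))) * zsummand w μ k := by
  simp only [zsummand, dotNat_shift, Real.exp_sub, Real.exp_neg]
  field_simp

lemma self_mul_exp_neg_le (δ x : ℝ) (hδ : 0 < δ) (hx : 0 ≤ x) :
    x * Real.exp (-(δ * x)) ≤ 1 / δ := by
  have hep : 0 < Real.exp (δ * x) := Real.exp_pos _
  have h : δ * x ≤ Real.exp (δ * x) := by nlinarith [Real.add_one_le_exp (δ * x)]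
  rw [Real.exp_neg, ← div_eq_mul_inv, div_le_div_iff₀ hep hδ]
  nlinarith

lemma shift_mem_Dmu (hw : ∀ k, 0 < w k) {μ : ℝ × ℝ} (hs : Summable (zsummand w μ))
    {δ : ℝ} (hδ : 0 < δ) : (μ.1 - δ, μ.2 - δ) ∈ Dmu w := by
  constructor <;>
  · refine Summable.of_nonneg_of_le (fun k => ?_) (fun k => ?_) (hs.mul_left (1/δ))
    · exact mul_nonneg (Nat.cast_nonneg _) (zs_nonneg hw _ k)
    · rw [zs_shift]
      have hk12 : (0:ℝ) ≤ (k.1 : ℝ) + k.2 := by positivity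
      have hb : ((k.1 : ℝ) + k.2) * Real.exp (-(δ * ((k.1:ℝ) + k.2))) ≤ 1/δ :=
        self_mul_exp_neg_le δ _ hδ hk12
      have hz := zs_nonneg hw μ k
      have h1 : (k.1 : ℝ) ≤ (k.1 : ℝ) + k.2 := le_add_of_nonneg_right (Nat.cast_nonneg _)
      have h2 : (k.2 : ℝ) ≤ (k.1 : ℝ) + k.2 := le_add_of_nonneg_left (Nat.cast_nonneg _)
      first
      | calc (k.1 : ℝ) * (Real.exp (-(δ * ((k.1:ℝ) + k.2))) * zsummand w μ k)
            ≤ ((k.1:ℝ) + k.2) * (Real.exp (-(δ * ((k.1:ℝ) + k.2))) * zsummand w μ k) := by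
              apply mul_le_mul_of_nonneg_right h1 (by positivity)
          _ ≤ (1/δ) * zsummand w μ k := by nlinarith
      | calc (k.2 : ℝ) * (Real.exp (-(δ * ((k.1:ℝ) + k.2))) * zsummand w μ k)
            ≤ ((k.1:ℝ) + k.2) * (Real.exp (-(δ * ((k.1:ℝ) + k.2))) * zsummand w μ k) := by
              apply mul_le_mul_of_nonneg_right h2 (by positivity)
          _ ≤ (1/δ) * zsummand w μ k := by nlinarith




lemma sqrt_mul_le_half (x y : ℝ) (hx : 0 ≤ x) (hy : 0 ≤ y) :
    Real.sqrt (x * y) ≤ (x + y) / 2 := by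
  rw [Real.sqrt_mul hx]
  nlinarith [Real.sq_sqrt hx, Real.sq_sqrt hy, Real.sqrt_nonneg x, Real.sqrt_nonneg y,
    sq_nonneg (Real.sqrt x - Real.sqrt y)]

lemma summable_sqrt_mul {ι : Type*} {a b : ι → ℝ} (ha : ∀ i, 0 ≤ a i) (hb : ∀ i, 0 ≤ b i)
    (hsa : Summable a) (hsb : Summable b) :
    Summable (fun i => Real.sqrt (a i * b i)) := by
  refine Summable.of_nonneg_of_le (fun i => Real.sqrt_nonneg _)
    (fun i => sqrt_mul_le_half _ _ (ha i) (hb i)) ?_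
  exact (hsa.add hsb).div_const 2

lemma tsum_sqrt_mul_sq_le {ι : Type*} {a b : ι → ℝ} (ha : ∀ i, 0 ≤ a i) (hb : ∀ i, 0 ≤ b i)
    (hsa : Summable a) (hsb : Summable b) :
    (∑' i, Real.sqrt (a i * b i)) ^ 2 ≤ (∑' i, a i) * (∑' i, b i) := by
  have hta : 0 ≤ ∑' i, a i := tsum_nonneg ha
  have htb : 0 ≤ ∑' i, b i := tsum_nonneg hb
  have key : ∑' i, Real.sqrt (a i * b i) ≤ Real.sqrt ((∑' i, a i) * (∑' i, b i)) := by
    refine Summable.tsum_le_of_sum_le (summable_sqrt_mul ha hb hsa hsb) (fun F => ?_)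
    rw [Real.le_sqrt (Finset.sum_nonneg (fun i _ => Real.sqrt_nonneg _)) (mul_nonneg hta htb)]
    have h1 : (∑ i ∈ F, Real.sqrt (a i * b i)) ^ 2 ≤ (∑ i ∈ F, a i) * (∑ i ∈ F, b i) := by
      have := Finset.sum_mul_sq_le_sq_mul_sq F (fun i => Real.sqrt (a i)) (fun i => Real.sqrt (b i))
      simp only [← Real.sqrt_mul (ha _), Real.sq_sqrt (ha _), Real.sq_sqrt (hb _)] at this
      exact this
    refine h1.trans (mul_le_mul (Summable.sum_le_tsum F (fun i _ => ha i) hsa)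
      (Summable.sum_le_tsum F (fun i _ => hb i) hsb) (Finset.sum_nonneg (fun i _ => hb i)) hta)
  calc (∑' i, Real.sqrt (a i * b i)) ^ 2
      ≤ (Real.sqrt ((∑' i, a i) * (∑' i, b i))) ^ 2 := by
        apply pow_le_pow_left₀ (tsum_nonneg (fun i => Real.sqrt_nonneg _)) key
    _ = (∑' i, a i) * (∑' i, b i) := Real.sq_sqrt (mul_nonneg hta htb)


lemma dotNat_mid (μ ν : ℝ × ℝ) (k : ℕ × ℕ) :
    dotNat ((μ.1 + ν.1)/2, (μ.2 + ν.2)/2) k = (dotNat μ k + dotNat ν k) / 2 := by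
  simp [dotNat]; ring

lemma zs_mid (hw : ∀ k, 0 < w k) (μ ν : ℝ × ℝ) (k : ℕ × ℕ) :
    zsummand w ((μ.1 + ν.1)/2, (μ.2 + ν.2)/2) k
      = Real.sqrt (zsummand w μ k * zsummand w ν k) := by
  have h0 : 0 ≤ zsummand w ((μ.1 + ν.1)/2, (μ.2 + ν.2)/2) k := zs_nonneg hw _ k
  rw [← Real.sqrt_sq h0]
  congr 1
  simp only [zsummand, dotNat_mid, sq]
  have e : Real.exp ((dotNat μ k + dotNat ν k)/2) * Real.exp ((dotNat μ k + dotNat ν k)/2)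
      = Real.exp (dotNat μ k) * Real.exp (dotNat ν k) := by
    rw [← Real.exp_add, ← Real.exp_add]; congr 1; ring
  linear_combination (w k * w k) * e

lemma mid_mem_Dmu (hw : ∀ k, 0 < w k) {μ ν : ℝ × ℝ} (hμ : μ ∈ Dmu w) (hν : ν ∈ Dmu w) :
    ((μ.1 + ν.1)/2, (μ.2 + ν.2)/2) ∈ Dmu w := by
  obtain ⟨hμ1, hμ2⟩ := hμ
  obtain ⟨hν1, hν2⟩ := hν
  constructor
  · refine Summable.of_nonneg_of_le
      (fun k => mul_nonneg (Nat.cast_nonneg _) (zs_nonneg hw _ k)) (fun k => ?_)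
      ((hμ1.add hν1).div_const 2)
    rw [zs_mid hw]
    calc (k.1 : ℝ) * Real.sqrt (zsummand w μ k * zsummand w ν k)
        ≤ (k.1 : ℝ) * ((zsummand w μ k + zsummand w ν k) / 2) := by
          apply mul_le_mul_of_nonneg_left
            (sqrt_mul_le_half _ _ (zs_nonneg hw μ k) (zs_nonneg hw ν k)) (Nat.cast_nonneg _)
      _ = ((k.1 : ℝ) * zsummand w μ k + (k.1 : ℝ) * zsummand w ν k) / 2 := by ring
  · refine Summable.of_nonneg_of_le
      (fun k => mul_nonneg (Nat.cast_nonneg _) (zs_nonneg hw _ k)) (fun k => ?_)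
      ((hμ2.add hν2).div_const 2)
    rw [zs_mid hw]
    calc (k.2 : ℝ) * Real.sqrt (zsummand w μ k * zsummand w ν k)
        ≤ (k.2 : ℝ) * ((zsummand w μ k + zsummand w ν k) / 2) := by
          apply mul_le_mul_of_nonneg_left
            (sqrt_mul_le_half _ _ (zs_nonneg hw μ k) (zs_nonneg hw ν k)) (Nat.cast_nonneg _)
      _ = ((k.2 : ℝ) * zsummand w μ k + (k.2 : ℝ) * zsummand w ν k) / 2 := by ring


lemma knorm_le_sum (k : ℕ × ℕ) : knorm k ≤ (k.1 : ℝ) + k.2 := by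
  have h1 : ((k.1:ℝ)^2 + (k.2:ℝ)^2) ≤ ((k.1:ℝ) + k.2)^2 := by
    nlinarith [Nat.cast_nonneg (α := ℝ) k.1, Nat.cast_nonneg (α := ℝ) k.2]
  calc knorm k ≤ Real.sqrt (((k.1:ℝ) + k.2)^2) := Real.sqrt_le_sqrt h1
    _ = (k.1:ℝ) + k.2 := Real.sqrt_sq (by positivity)

lemma exists_mem_domz (hw : ∀ k, 0 < w k) (hexp : ExpBounded w) :
    ∃ μ : ℝ × ℝ, Summable (zsummand w μ) := by
  obtain ⟨ξ, hξ, hb⟩ := hexp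
  set ξ' : ℝ := max ξ 1 with hξ'def
  have hξ'1 : (1:ℝ) ≤ ξ' := le_max_right _ _
  have hξ'0 : (0:ℝ) < ξ' := lt_of_lt_of_le one_pos hξ'1
  set c : ℝ := Real.log (2 * ξ') with hcdef
  refine ⟨(-c, -c), ?_⟩
  have hec : Real.exp (-c) = 1 / (2 * ξ') := by
    rw [Real.exp_neg, hcdef, Real.exp_log (by positivity)]
    exact (one_div _).symm
  have hsum2 : Summable (fun k : ℕ × ℕ => ((1:ℝ)/2) ^ k.1 * ((1:ℝ)/2) ^ k.2) := by
    have hg : Summable (fun n : ℕ => ((1:ℝ)/2) ^ n) :=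
      summable_geometric_of_lt_one (by norm_num) (by norm_num)
    exact hg.mul_of_nonneg hg (fun n => by positivity) (fun n => by positivity)
  refine Summable.of_nonneg_of_le (fun k => zs_nonneg hw _ k) (fun k => ?_) hsum2
  have hwk : w k ≤ ξ' ^ ((k.1 : ℝ) + k.2) := by
    calc w k ≤ ξ ^ knorm k := hb k
      _ ≤ ξ' ^ knorm k := Real.rpow_le_rpow hξ.le (le_max_left _ _) (Real.sqrt_nonneg _)
      _ ≤ ξ' ^ ((k.1 : ℝ) + k.2) := Real.rpow_le_rpow_of_exponent_le hξ'1 (knorm_le_sum k)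
  have hdot : dotNat (-c, -c) k = -(c * ((k.1:ℝ) + k.2)) := by simp [dotNat]; ring
  have hexpdot : Real.exp (dotNat (-c, -c) k) = ((1:ℝ)/(2*ξ')) ^ ((k.1:ℝ) + k.2) := by
    rw [hdot, ← hec]
    rw [← Real.exp_log (show (0:ℝ) < Real.exp (-c) from Real.exp_pos _)]
    rw [← Real.exp_mul]
    congr 1
    rw [Real.log_exp]
    ring
  have key : zsummand w (-c, -c) k ≤ ((1:ℝ)/2) ^ ((k.1:ℝ) + k.2) := by
    rw [zsummand, hexpdot]
    calc w k * ((1:ℝ)/(2*ξ')) ^ ((k.1:ℝ) + k.2)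
        ≤ ξ' ^ ((k.1:ℝ)+k.2) * ((1:ℝ)/(2*ξ')) ^ ((k.1:ℝ) + k.2) := by
          apply mul_le_mul_of_nonneg_right hwk (Real.rpow_nonneg (by positivity) _)
      _ = (ξ' * ((1:ℝ)/(2*ξ'))) ^ ((k.1:ℝ)+k.2) := by
          rw [← Real.mul_rpow hξ'0.le (by positivity)]
      _ = ((1:ℝ)/2) ^ ((k.1:ℝ)+k.2) := by
          congr 1
          field_simp
  calc zsummand w (-c,-c) k ≤ ((1:ℝ)/2) ^ ((k.1:ℝ) + k.2) := key
    _ = ((1:ℝ)/2) ^ k.1 * ((1:ℝ)/2) ^ k.2 := by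
        rw [Real.rpow_add (by norm_num), Real.rpow_natCast, Real.rpow_natCast]

lemma exists_mem_Dmu (hw : ∀ k, 0 < w k) (hexp : ExpBounded w) :
    ∃ μ : ℝ × ℝ, μ ∈ Dmu w := by
  obtain ⟨μ, hs⟩ := exists_mem_domz hw hexp
  exact ⟨_, shift_mem_Dmu hw hs one_pos⟩


lemma M1_eq (hw : ∀ k, 0 < w k) {μ0 : ℝ × ℝ} (h0 : μ0 ∈ Dmu w) :
    ∑' k : ℕ × ℕ, (k.1:ℝ) * zsummand w μ0 k = R1 w μ0 * zfun w μ0 := by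
  have hz0 : 0 < zfun w μ0 := zfun_pos hw (summable_zs_of_mem_Dmu hw h0)
  have : R1 w μ0 = (∑' k : ℕ × ℕ, (k.1:ℝ) * zsummand w μ0 k) / zfun w μ0 := by
    rw [R1, ← tsum_div_const]
    congr 1; funext k; rw [nu1, mul_div_assoc]
  rw [this, div_mul_cancel₀ _ hz0.ne']

lemma M2_eq (hw : ∀ k, 0 < w k) {μ0 : ℝ × ℝ} (h0 : μ0 ∈ Dmu w) :
    ∑' k : ℕ × ℕ, (k.2:ℝ) * zsummand w μ0 k = R2 w μ0 * zfun w μ0 := by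
  have hz0 : 0 < zfun w μ0 := zfun_pos hw (summable_zs_of_mem_Dmu hw h0)
  have : R2 w μ0 = (∑' k : ℕ × ℕ, (k.2:ℝ) * zsummand w μ0 k) / zfun w μ0 := by
    rw [R2, ← tsum_div_const]
    congr 1; funext k; rw [nu1, mul_div_assoc]
  rw [this, div_mul_cancel₀ _ hz0.ne']

lemma maximizer_of_R_eq (hw : ∀ k, 0 < w k) {μ0 : ℝ × ℝ} (h0 : μ0 ∈ Dmu w) :
    ∀ μ ∈ Dmu w, dotR (Rmap w μ0) μ - press w μ ≤ dotR (Rmap w μ0) μ0 - press w μ0 := by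
  intro μ hμ
  have hz0s := summable_zs_of_mem_Dmu hw h0
  have hzs := summable_zs_of_mem_Dmu hw hμ
  have hz0 : 0 < zfun w μ0 := zfun_pos hw hz0s
  set ρ1 : ℝ := R1 w μ0 with hρ1
  set ρ2 : ℝ := R2 w μ0 with hρ2
  set Δ1 : ℝ := μ.1 - μ0.1 with hΔ1
  set Δ2 : ℝ := μ.2 - μ0.2 with hΔ2
  set d : ℝ := Δ1 * ρ1 + Δ2 * ρ2 with hd
  -- termwise bound
  have hterm : ∀ k : ℕ × ℕ,
      Real.exp d * (zsummand w μ0 k + (Δ1 * k.1 + Δ2 * k.2 - d) * zsummand w μ0 k)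
        ≤ zsummand w μ k := by
    intro k
    have hzz : zsummand w μ k = zsummand w μ0 k * Real.exp (Δ1 * k.1 + Δ2 * k.2) := by
      simp only [zsummand]
      rw [mul_assoc, ← Real.exp_add]
      congr 2
      simp only [dotNat, hΔ1, hΔ2]; ring
    have he1 : Real.exp (Δ1 * k.1 + Δ2 * k.2)
        = Real.exp d * Real.exp (Δ1 * k.1 + Δ2 * k.2 - d) := by
      rw [← Real.exp_add]; congr 1; ring
    have he2 : (Δ1 * k.1 + Δ2 * k.2 - d) + 1 ≤ Real.exp (Δ1 * k.1 + Δ2 * k.2 - d) :=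
      Real.add_one_le_exp _
    have hz := zs_nonneg hw μ0 k
    have hed : 0 < Real.exp d := Real.exp_pos _
    rw [hzz, he1]
    nlinarith [mul_nonneg hz hed.le]
  -- summability of the lower bound
  have hlin : Summable (fun k : ℕ × ℕ =>
      zsummand w μ0 k + (Δ1 * k.1 + Δ2 * k.2 - d) * zsummand w μ0 k) := by
    have heq : (fun k : ℕ × ℕ =>
        zsummand w μ0 k + (Δ1 * k.1 + Δ2 * k.2 - d) * zsummand w μ0 k)
        = fun k : ℕ × ℕ => (zsummand w μ0 k + (Δ1 * ((k.1:ℝ) * zsummand w μ0 k)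
            + Δ2 * ((k.2:ℝ) * zsummand w μ0 k))) - d * zsummand w μ0 k := by
      funext k; ring
    rw [heq]
    exact (hz0s.add ((h0.1.mul_left Δ1).add (h0.2.mul_left Δ2))).sub (hz0s.mul_left d)
  -- sum of the lower bound
  have hsum : ∑' k : ℕ × ℕ,
      (zsummand w μ0 k + (Δ1 * k.1 + Δ2 * k.2 - d) * zsummand w μ0 k) = zfun w μ0 := by
    have heq : (fun k : ℕ × ℕ =>
        zsummand w μ0 k + (Δ1 * k.1 + Δ2 * k.2 - d) * zsummand w μ0 k)
        = fun k : ℕ × ℕ => (zsummand w μ0 k + (Δ1 * ((k.1:ℝ) * zsummand w μ0 k)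
            + Δ2 * ((k.2:ℝ) * zsummand w μ0 k))) - d * zsummand w μ0 k := by
      funext k; ring
    rw [heq, Summable.tsum_sub (hz0s.add ((h0.1.mul_left Δ1).add (h0.2.mul_left Δ2)))
        (hz0s.mul_left d),
      Summable.tsum_add hz0s ((h0.1.mul_left Δ1).add (h0.2.mul_left Δ2)),
      Summable.tsum_add (h0.1.mul_left Δ1) (h0.2.mul_left Δ2),
      tsum_mul_left, tsum_mul_left, tsum_mul_left, M1_eq hw h0, M2_eq hw h0]
    show zfun w μ0 + (Δ1 * (ρ1 * zfun w μ0) + Δ2 * (ρ2 * zfun w μ0)) - d * zfun w μ0 = zfun w μ0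
    rw [hd]; ring
  have key : Real.exp d * zfun w μ0 ≤ zfun w μ := by
    calc Real.exp d * zfun w μ0
        = ∑' k : ℕ × ℕ, Real.exp d *
            (zsummand w μ0 k + (Δ1 * k.1 + Δ2 * k.2 - d) * zsummand w μ0 k) := by
          rw [tsum_mul_left, hsum]
      _ ≤ zfun w μ := Summable.tsum_le_tsum hterm (hlin.mul_left _) hzs
  have hpress : d + press w μ0 ≤ press w μ := by
    have := Real.log_le_log (by positivity) key
    rwa [Real.log_mul (Real.exp_pos d).ne' hz0.ne', Real.log_exp] at this
  have hdot : dotR (Rmap w μ0) μ - dotR (Rmap w μ0) μ0 = d := by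
    simp only [dotR, Rmap, hd, hΔ1, hΔ2, hρ1, hρ2]; ring
  linarith


lemma zfun_mid_sq_lt (hw : ∀ k, 0 < w k) {μ ν : ℝ × ℝ} (hμ : μ ∈ Dmu w) (hν : ν ∈ Dmu w)
    (hne : μ ≠ ν) :
    (zfun w ((μ.1 + ν.1)/2, (μ.2 + ν.2)/2)) ^ 2 < zfun w μ * zfun w ν := by
  have ha : ∀ k, 0 < zsummand w μ k := fun k => zs_pos hw μ k
  have hb : ∀ k, 0 < zsummand w ν k := fun k => zs_pos hw ν k
  have hsa : Summable (zsummand w μ) := summable_zs_of_mem_Dmu hw hμ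
  have hsb : Summable (zsummand w ν) := summable_zs_of_mem_Dmu hw hν
  have hsc : Summable (fun k => Real.sqrt (zsummand w μ k * zsummand w ν k)) :=
    summable_sqrt_mul (fun k => (ha k).le) (fun k => (hb k).le) hsa hsb
  obtain ⟨k1, hk10, hk1⟩ : ∃ k1 : ℕ × ℕ, k1 ≠ 0 ∧ dotNat μ k1 ≠ dotNat ν k1 := by
    by_cases h1 : μ.1 = ν.1
    · have h2 : μ.2 ≠ ν.2 := fun h2 => hne (Prod.ext h1 h2)
      exact ⟨(0,1), by simp [Prod.ext_iff], by simpa [dotNat] using h2⟩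
    · exact ⟨(1,0), by simp [Prod.ext_iff], by simpa [dotNat] using h1⟩
  have h0k1 : (0 : ℕ × ℕ) ≠ k1 := fun h => hk10 h.symm
  set T : Finset (ℕ × ℕ) := {0, k1} with hTdef
  have hsplit : ∀ (f : (ℕ × ℕ) → ℝ), Summable f →
      (∑' k, f k) = (f 0 + f k1) + ∑' k : ↑((T : Set (ℕ × ℕ))ᶜ), f k := by
    intro f hf
    rw [← Summable.sum_add_tsum_compl (s := T) hf]
    congr 1
    exact Finset.sum_pair h0k1
  set A : ℝ := ∑' k : ↑((T : Set (ℕ × ℕ))ᶜ), zsummand w μ k with hAdef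
  set B : ℝ := ∑' k : ↑((T : Set (ℕ × ℕ))ᶜ), zsummand w ν k with hBdef
  set C : ℝ := ∑' k : ↑((T : Set (ℕ × ℕ))ᶜ),
      Real.sqrt (zsummand w μ k * zsummand w ν k) with hCdef
  have hA : 0 ≤ A := tsum_nonneg (fun k => (ha _).le)
  have hB : 0 ≤ B := tsum_nonneg (fun k => (hb _).le)
  have hC : 0 ≤ C := tsum_nonneg (fun k => Real.sqrt_nonneg _)
  have hCsq : C ^ 2 ≤ A * B :=
    tsum_sqrt_mul_sq_le (fun k => (ha _).le) (fun k => (hb _).le)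
      (hsa.subtype _) (hsb.subtype _)
  set a0 : ℝ := zsummand w μ 0
  set a1 : ℝ := zsummand w μ k1
  set b0 : ℝ := zsummand w ν 0
  set b1 : ℝ := zsummand w ν k1
  have ha0 : 0 < a0 := ha 0
  have ha1 : 0 < a1 := ha k1
  have hb0 : 0 < b0 := hb 0
  have hb1 : 0 < b1 := hb k1
  have hne01 : a0 * b1 ≠ a1 * b0 := by
    have e0 : dotNat μ 0 = 0 := by simp [dotNat]
    have e0' : dotNat ν 0 = 0 := by simp [dotNat]
    show zsummand w μ 0 * zsummand w ν k1 ≠ zsummand w μ k1 * zsummand w ν 0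
    simp only [zsummand, e0, e0', Real.exp_zero, mul_one]
    intro h
    apply hk1
    have hw0 : (0:ℝ) < w 0 := hw 0
    have hw1 : (0:ℝ) < w k1 := hw k1
    apply Real.exp_injective
    have h' : (w 0 * w k1) * Real.exp (dotNat μ k1) = (w 0 * w k1) * Real.exp (dotNat ν k1) := by
      linear_combination -h
    exact mul_left_cancel₀ (by positivity) h' 
  -- strict two-point Cauchy–Schwarz
  have h2pt : (Real.sqrt (a0 * b0) + Real.sqrt (a1 * b1)) ^ 2 < (a0 + a1) * (b0 + b1) := by
    have e1 : Real.sqrt (a0 * b0) * Real.sqrt (a1 * b1)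
        = Real.sqrt (a0 * b1) * Real.sqrt (a1 * b0) := by
      rw [← Real.sqrt_mul (mul_nonneg ha0.le hb0.le), ← Real.sqrt_mul (mul_nonneg ha0.le hb1.le)]
      congr 1; ring
    have hsne : Real.sqrt (a0 * b1) ≠ Real.sqrt (a1 * b0) := by
      intro h
      apply hne01
      have := congrArg (fun x => x ^ 2) h
      simpa only [Real.sq_sqrt (mul_nonneg ha0.le hb1.le),
        Real.sq_sqrt (mul_nonneg ha1.le hb0.le)] using this
    have hpos : 0 < (Real.sqrt (a0 * b1) - Real.sqrt (a1 * b0)) ^ 2 :=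
      (sq_nonneg _).lt_of_ne (Ne.symm (pow_ne_zero 2 (sub_ne_zero_of_ne hsne)))
    nlinarith [Real.sq_sqrt (mul_nonneg ha0.le hb0.le),
      Real.sq_sqrt (mul_nonneg ha1.le hb1.le),
      Real.sq_sqrt (mul_nonneg ha0.le hb1.le),
      Real.sq_sqrt (mul_nonneg ha1.le hb0.le)]
  -- cross term
  set c2 : ℝ := Real.sqrt (a0 * b0) + Real.sqrt (a1 * b1) with hc2def
  have hc2 : 0 ≤ c2 := by positivity
  have hcross : c2 * C ≤ ((a0 + a1) * B + A * (b0 + b1)) / 2 := by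
    have h1 : c2 ≤ Real.sqrt ((a0 + a1) * (b0 + b1)) := by
      rw [Real.le_sqrt hc2 (mul_nonneg (by linarith) (by linarith))]
      exact h2pt.le
    have h2 : C ≤ Real.sqrt (A * B) := by
      rw [Real.le_sqrt hC (mul_nonneg hA hB)]
      exact hCsq
    calc c2 * C ≤ Real.sqrt ((a0 + a1) * (b0 + b1)) * Real.sqrt (A * B) := by
          apply mul_le_mul h1 h2 hC (Real.sqrt_nonneg _)
      _ = Real.sqrt (((a0 + a1) * B) * (A * (b0 + b1))) := by
          rw [← Real.sqrt_mul (mul_nonneg (by linarith) (by linarith))]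
          congr 1; ring
      _ ≤ ((a0 + a1) * B + A * (b0 + b1)) / 2 :=
          sqrt_mul_le_half _ _ (mul_nonneg (by linarith) hB) (mul_nonneg hA (by linarith))
  -- assemble
  have hzmid : zfun w ((μ.1 + ν.1)/2, (μ.2 + ν.2)/2) = c2 + C := by
    rw [zfun]
    have : (fun k => zsummand w ((μ.1 + ν.1)/2, (μ.2 + ν.2)/2) k)
        = fun k => Real.sqrt (zsummand w μ k * zsummand w ν k) := by
      funext k; exact zs_mid hw μ ν k
    rw [show ∑' k, zsummand w ((μ.1 + ν.1)/2, (μ.2 + ν.2)/2) k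
        = ∑' k, Real.sqrt (zsummand w μ k * zsummand w ν k) from tsum_congr (fun k => zs_mid hw μ ν k)]
    exact hsplit _ hsc
  have hzμ : zfun w μ = (a0 + a1) + A := hsplit _ hsa
  have hzν : zfun w ν = (b0 + b1) + B := hsplit _ hsb
  rw [hzmid, hzμ, hzν]
  nlinarith [hCsq, hcross, h2pt, hc2, hC, hA, hB]

lemma maximizer_unique (hw : ∀ k, 0 < w k) {ρ μ ν : ℝ × ℝ}
    (hμ : μ ∈ Dmu w) (hν : ν ∈ Dmu w)
    (hmaxμ : ∀ μ' ∈ Dmu w, dotR ρ μ' - press w μ' ≤ dotR ρ μ - press w μ)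
    (hmaxν : ∀ μ' ∈ Dmu w, dotR ρ μ' - press w μ' ≤ dotR ρ ν - press w ν) :
    μ = ν := by
  by_contra hne
  have heq : dotR ρ μ - press w μ = dotR ρ ν - press w ν :=
    le_antisymm (hmaxν μ hμ) (hmaxμ ν hν)
  have hmid : ((μ.1 + ν.1)/2, (μ.2 + ν.2)/2) ∈ Dmu w := mid_mem_Dmu hw hμ hν
  have hzmid : 0 < zfun w ((μ.1 + ν.1)/2, (μ.2 + ν.2)/2) :=
    zfun_pos hw (summable_zs_of_mem_Dmu hw hmid)
  have hzμ : 0 < zfun w μ := zfun_pos hw (summable_zs_of_mem_Dmu hw hμ)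
  have hzν : 0 < zfun w ν := zfun_pos hw (summable_zs_of_mem_Dmu hw hν)
  have hlt : (zfun w ((μ.1 + ν.1)/2, (μ.2 + ν.2)/2)) ^ 2 < zfun w μ * zfun w ν :=
    zfun_mid_sq_lt hw hμ hν hne
  have hplog : 2 * press w ((μ.1 + ν.1)/2, (μ.2 + ν.2)/2) < press w μ + press w ν := by
    have := Real.log_lt_log (by positivity) hlt
    rwa [Real.log_pow, Real.log_mul hzμ.ne' hzν.ne'] at this
  have hdmid : dotR ρ ((μ.1 + ν.1)/2, (μ.2 + ν.2)/2) = (dotR ρ μ + dotR ρ ν)/2 := by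
    simp only [dotR]; ring
  have h1 := hmaxμ _ hmid
  rw [hdmid] at h1
  simp only [press] at *
  linarith

lemma div_le_log_one_add (x : ℝ) (hx : 0 ≤ x) : x / (1 + x) ≤ Real.log (1 + x) := by
  have h1 : (0:ℝ) < 1 + x := by linarith
  rw [Real.le_log_iff_exp_le h1]
  set u : ℝ := x / (1 + x) with hu
  have h2 : 1 - u ≤ (Real.exp u)⁻¹ := by
    have := Real.add_one_le_exp (-u)
    rwa [Real.exp_neg, neg_add_eq_sub] at this
  have hE : 0 < Real.exp u := Real.exp_pos u
  have hEi : Real.exp u * (Real.exp u)⁻¹ = 1 := mul_inv_cancel₀ hE.ne'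
  have h3 : (1 - u) * (1 + x) = 1 := by
    rw [hu]; field_simp
    ring
  nlinarith [mul_le_mul_of_nonneg_left h2 hE.le]

set_option maxHeartbeats 2000000 in
lemma exists_maximizer (hw : ∀ k, 0 < w k) (hexp : ExpBounded w)
    (ρ : ℝ × ℝ) (h1 : 0 < ρ.1) (h2 : 0 < ρ.2) :
    ∃ μb ∈ Dmu w, ∀ μ ∈ Dmu w, dotR ρ μ - press w μ ≤ dotR ρ μb - press w μb := by
  classical
  obtain ⟨μs, hμs⟩ := exists_mem_Dmu hw hexp
  set f : (ℝ × ℝ) → ℝ := fun μ => dotR ρ μ - press w μ with hfdef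
  set m : ℝ := f μs - 1 with hmdef
  set n : ℕ := ⌈ρ.1 + ρ.2⌉₊ + 1 with hndef
  have hn : ρ.1 + ρ.2 + 1 ≤ (n : ℝ) := by
    have := Nat.le_ceil (ρ.1 + ρ.2)
    push_cast [hndef]
    linarith
  have hn1 : (1:ℝ) ≤ (n:ℝ) := by nlinarith
  set A : ℝ := m + Real.log (w 0) with hAdef
  set B1 : ℝ := m + Real.log (w (n, 0)) with hB1def
  set B2 : ℝ := m + Real.log (w (0, n)) with hB2def
  set K : ℝ := -(ρ.1 * B1 + ρ.2 * B2) with hKdef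
  set U : ℝ := |K| + |B1| + |B2| with hUdef
  have hU0 : 0 ≤ U := by positivity
  set L : ℝ := min ((A - ρ.2 * U)/ρ.1) ((A - ρ.1 * U)/ρ.2) with hLdef
  -- the sublevel set is contained in a box
  have box : ∀ μ ∈ Dmu w, m ≤ f μ → μ.1 ∈ Icc L U ∧ μ.2 ∈ Icc L U := by
    intro μ hμ hm
    have hs := summable_zs_of_mem_Dmu hw hμ
    have p0 : Real.log (w 0) ≤ press w μ := by
      have := press_ge hw hs 0
      simpa [dotNat] using this
    have p1 : μ.1 * n + Real.log (w (n, 0)) ≤ press w μ := by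
      have := press_ge hw hs (n, 0)
      simpa [dotNat] using this
    have p2 : μ.2 * n + Real.log (w (0, n)) ≤ press w μ := by
      have := press_ge hw hs (0, n)
      simpa [dotNat] using this
    have hfμ : f μ = ρ.1 * μ.1 + ρ.2 * μ.2 - press w μ := by
      rw [hfdef]; simp [dotR]
    set S : ℝ := ρ.1 * μ.1 + ρ.2 * μ.2 with hSdef
    have i0 : A ≤ S := by rw [hAdef]; rw [hfμ] at hm; linarith
    have i1 : μ.1 * n ≤ S - B1 := by rw [hB1def]; rw [hfμ] at hm; linarith
    have i2 : μ.2 * n ≤ S - B2 := by rw [hB2def]; rw [hfμ] at hm; linarith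
    have hSK : S ≤ |K| := by
      rcases le_or_gt 0 S with hS | hS
      · have j1 := mul_le_mul_of_nonneg_left i1 h1.le
        have j2 := mul_le_mul_of_nonneg_left i2 h2.le
        have j3 : 0 ≤ S * ((n:ℝ) - ρ.1 - ρ.2 - 1) := mul_nonneg hS (by linarith)
        nlinarith [le_abs_self K]
      · linarith [abs_nonneg K]
    have hU1 : μ.1 ≤ U := by
      rcases le_or_gt μ.1 0 with h | h
      · linarith
      · have : μ.1 * 1 ≤ μ.1 * n := mul_le_mul_of_nonneg_left hn1 h.le
        have h5 := le_abs_self B1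
        have h6 := neg_abs_le B1
        rw [hUdef]
        linarith [abs_nonneg B2]
    have hU2 : μ.2 ≤ U := by
      rcases le_or_gt μ.2 0 with h | h
      · linarith
      · have : μ.2 * 1 ≤ μ.2 * n := mul_le_mul_of_nonneg_left hn1 h.le
        have h6 := neg_abs_le B2
        rw [hUdef]
        linarith [abs_nonneg B1]
    have hL1 : (A - ρ.2 * U)/ρ.1 ≤ μ.1 := by
      rw [div_le_iff₀ h1]
      have := mul_le_mul_of_nonneg_left hU2 h2.le
      linarith
    have hL2 : (A - ρ.1 * U)/ρ.2 ≤ μ.2 := by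
      rw [div_le_iff₀ h2]
      have := mul_le_mul_of_nonneg_left hU1 h1.le
      linarith
    exact ⟨⟨le_trans (min_le_left _ _) hL1, hU1⟩, ⟨le_trans (min_le_right _ _) hL2, hU2⟩⟩
  -- f is bounded above on Dmu
  have hbdd : BddAbove (f '' Dmu w) := by
    refine ⟨max m (ρ.1 * U + ρ.2 * U - Real.log (w 0)), ?_⟩
    rintro y ⟨μ, hμ, rfl⟩
    rcases le_or_gt (f μ) m with h | h
    · exact le_max_of_le_left h
    · obtain ⟨⟨_, hU1⟩, ⟨_, hU2⟩⟩ := box μ hμ h.le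
      apply le_max_of_le_right
      have hs := summable_zs_of_mem_Dmu hw hμ
      have p0 : Real.log (w 0) ≤ press w μ := by
        have := press_ge hw hs 0
        simpa [dotNat] using this
      have hfμ : f μ = ρ.1 * μ.1 + ρ.2 * μ.2 - press w μ := by
        rw [hfdef]; simp [dotR]
      rw [hfμ]
      have := mul_le_mul_of_nonneg_left hU1 h1.le
      have := mul_le_mul_of_nonneg_left hU2 h2.le
      linarith
  have hne : (f '' Dmu w).Nonempty := ⟨f μs, μs, hμs, rfl⟩
  set s : ℝ := sSup (f '' Dmu w) with hsdef
  have hsm : f μs ≤ s := le_csSup hbdd ⟨μs, hμs, rfl⟩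
  have hles : ∀ μ ∈ Dmu w, f μ ≤ s := fun μ hμ => le_csSup hbdd ⟨μ, hμ, rfl⟩
  -- maximizing sequence
  have hseq : ∀ j : ℕ, ∃ μ, μ ∈ Dmu w ∧ s - 1/(j+1) < f μ := by
    intro j
    have hlt : s - 1/(j+1) < s := by
      have : (0:ℝ) < 1/(j+1) := by positivity
      linarith
    obtain ⟨y, ⟨μ, hμ, rfl⟩, hy⟩ := exists_lt_of_lt_csSup hne hlt
    exact ⟨μ, hμ, hy⟩
  choose μseq hμmem hμlt using hseq
  have hμbox : ∀ j, μseq j ∈ Icc ((L, L) : ℝ × ℝ) ((U, U) : ℝ × ℝ) := by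
    intro j
    have hmf : m ≤ f (μseq j) := by
      have hd1 : (1:ℝ)/((j:ℝ)+1) ≤ 1 := by
        rw [div_le_one (by positivity)]
        linarith [Nat.cast_nonneg (α := ℝ) j]
      calc m = f μs - 1 := hmdef
        _ ≤ s - 1 := by linarith
        _ ≤ s - 1/((j:ℝ)+1) := by linarith
        _ ≤ f (μseq j) := (hμlt j).le
    obtain ⟨⟨ha1, ha2⟩, ⟨hb1, hb2⟩⟩ := box (μseq j) (hμmem j) hmf
    exact ⟨⟨ha1, hb1⟩, ⟨ha2, hb2⟩⟩
  obtain ⟨μh, hμhmem, φ, hφ, hconv⟩ := (isCompact_Icc).tendsto_subseq hμbox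
  -- convergence of f along the subsequence
  have hφat : Tendsto φ atTop atTop := hφ.tendsto_atTop
  have hlow : Tendsto (fun j => s - 1/((φ j : ℝ)+1)) atTop (𝓝 s) := by
    have h0 : Tendsto (fun n : ℕ => 1/((n:ℝ)+1)) atTop (𝓝 0) :=
      tendsto_one_div_add_atTop_nhds_zero_nat
    have := (tendsto_const_nhds (x := s) (f := atTop (α := ℕ))).sub (h0.comp hφat)
    simpa using this
  have htf : Tendsto (fun j => f (μseq (φ j))) atTop (𝓝 s) := by
    refine tendsto_of_tendsto_of_tendsto_of_le_of_le hlow tendsto_const_nhds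
      (fun j => (hμlt (φ j)).le) (fun j => hles _ (hμmem (φ j)))
  have hdotc : Continuous fun μ : ℝ × ℝ => dotR ρ μ := by
    unfold dotR; continuity
  have htd : Tendsto (fun j => dotR ρ (μseq (φ j))) atTop (𝓝 (dotR ρ μh)) :=
    (hdotc.tendsto μh).comp hconv
  have htp : Tendsto (fun j => press w (μseq (φ j))) atTop (𝓝 (dotR ρ μh - s)) := by
    have := htd.sub htf
    refine this.congr (fun j => ?_)
    rw [hfdef]; ring
  set Zh : ℝ := Real.exp (dotR ρ μh - s) with hZhdef
  have hZh : 0 < Zh := Real.exp_pos _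
  have htz : Tendsto (fun j => zfun w (μseq (φ j))) atTop (𝓝 Zh) := by
    have := (Real.continuous_exp.tendsto _).comp htp
    refine this.congr (fun j => ?_)
    show Real.exp (press w (μseq (φ j))) = zfun w (μseq (φ j))
    exact Real.exp_log (zfun_pos hw (summable_zs_of_mem_Dmu hw (hμmem (φ j))))
  -- partial sums at μh are bounded by Zh
  have hFb : ∀ F : Finset (ℕ × ℕ), ∑ k ∈ F, zsummand w μh k ≤ Zh := by
    intro F
    have hcontF : Tendsto (fun j => ∑ k ∈ F, zsummand w (μseq (φ j)) k) atTop
        (𝓝 (∑ k ∈ F, zsummand w μh k)) := by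
      refine tendsto_finset_sum F (fun k _ => ?_)
      have hck : Continuous fun μ : ℝ × ℝ => zsummand w μ k := by
        unfold zsummand dotNat; continuity
      exact (hck.tendsto μh).comp hconv
    refine le_of_tendsto_of_tendsto' hcontF htz (fun j => ?_)
    exact Summable.sum_le_tsum F (fun k _ => zs_nonneg hw _ k)
      (summable_zs_of_mem_Dmu hw (hμmem (φ j)))
  have hsumh : Summable (zsummand w μh) :=
    summable_of_sum_le (fun k => zs_nonneg hw μh k) hFb
  have hzh_le : zfun w μh ≤ Zh := Summable.tsum_le_of_sum_le hsumh hFb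
  have hfs : s ≤ f μh := by
    have hp : press w μh ≤ dotR ρ μh - s := by
      have := Real.log_le_log (zfun_pos hw hsumh) hzh_le
      rwa [hZhdef, Real.log_exp] at this
    rw [hfdef]
    simp only
    linarith
  -- μh lies in Dmu
  have hDmu : μh ∈ Dmu w := by
    by_contra hnot
    clear hFb htz htp htd htf hlow hφat hconv hμbox hμlt hμmem hdotc box hbdd hne hsm hμhmem hφ
    clear μseq φ
    have hns : ¬ Summable (fun k : ℕ × ℕ => ((k.1:ℝ)+k.2) * zsummand w μh k) := by
      intro hsumm
      apply hnot
      constructor <;>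
      · refine Summable.of_nonneg_of_le
          (fun k => mul_nonneg (Nat.cast_nonneg _) (zs_nonneg hw _ k)) (fun k => ?_) hsumm
        refine mul_le_mul_of_nonneg_right ?_ (zs_nonneg hw _ k)
        first
        | exact le_add_of_nonneg_right (Nat.cast_nonneg _)
        | exact le_add_of_nonneg_left (Nat.cast_nonneg _)
    set c : ℝ := ρ.1 + ρ.2 with hcdef
    have hc : 0 < c := by rw [hcdef]; linarith
    set Bq : ℝ := 8*c*Zh with hBqdef
    obtain ⟨F, hF8⟩ : ∃ F : Finset (ℕ × ℕ),
        Bq < ∑ k ∈ F, ((k.1:ℝ)+k.2) * zsummand w μh k := by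
      by_contra hcon
      push_neg at hcon
      exact hns (summable_of_sum_le
        (fun k => mul_nonneg (by positivity) (zs_nonneg hw _ k)) hcon)
    set K : ℝ := ((F.sup (fun k => k.1 + k.2) : ℕ) : ℝ) + 1 with hKdef2
    have hK1 : (1:ℝ) ≤ K := by
      rw [hKdef2]
      linarith [Nat.cast_nonneg (α := ℝ) (F.sup fun k : ℕ × ℕ => k.1 + k.2)]
    have hKF : ∀ k ∈ F, ((k.1:ℝ)+k.2) ≤ K := by
      intro k hk
      have := Finset.le_sup (f := fun k : ℕ × ℕ => k.1 + k.2) hk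
      rw [hKdef2]
      push_cast
      have : ((k.1 + k.2 : ℕ) : ℝ) ≤ ((F.sup (fun k => k.1 + k.2) : ℕ) : ℝ) := by
        exact_mod_cast this
      push_cast at this
      linarith
    set t : ℝ := min (1/(2*K)) (1/(2*c)) with htdef
    have ht : 0 < t := by
      rw [htdef]
      apply lt_min <;> positivity
    have hKpos : (0:ℝ) < K := by linarith
    have htK : t * K ≤ 1/2 := by
      have h := min_le_left (1/(2*K)) (1/(2*c))
      rw [← htdef, le_div_iff₀ (by linarith : (0:ℝ) < 2*K)] at h
      nlinarith
    have htc : t * c ≤ 1/2 := by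
      have h := min_le_right (1/(2*K)) (1/(2*c))
      rw [← htdef, le_div_iff₀ (by linarith : (0:ℝ) < 2*c)] at h
      nlinarith
    set μt : ℝ × ℝ := (μh.1 - t, μh.2 - t) with hμtdef
    have hμtDmu : μt ∈ Dmu w := shift_mem_Dmu hw hsumh ht
    have hzt_s : Summable (zsummand w μt) := summable_zs_of_mem_Dmu hw hμtDmu
    have hmom : Summable (fun k : ℕ × ℕ => ((k.1:ℝ)+k.2) * zsummand w μt k) := by
      refine (hμtDmu.1.add hμtDmu.2).congr (fun k => ?_)
      ring
    set N : ℝ := ∑' k : ℕ × ℕ, ((k.1:ℝ)+k.2) * zsummand w μt k with hNdef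
    -- N is large
    have hNB : Bq/2 < N := by
      have step1 : ∀ k ∈ F, (1/2) * (((k.1:ℝ)+k.2) * zsummand w μh k)
          ≤ ((k.1:ℝ)+k.2) * zsummand w μt k := by
        intro k hk
        have hzsk : zsummand w μt k
            = Real.exp (-(t * ((k.1:ℝ)+k.2))) * zsummand w μh k := zs_shift μh t k
        rw [hzsk]
        have hu : t * ((k.1:ℝ)+k.2) ≤ 1/2 := by
          have hkk : ((k.1:ℝ)+k.2) ≤ K := hKF k hk
          calc t * ((k.1:ℝ)+k.2) ≤ t * K := mul_le_mul_of_nonneg_left hkk ht.le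
            _ ≤ 1/2 := htK
        have he : 1 - t * ((k.1:ℝ)+k.2) ≤ Real.exp (-(t * ((k.1:ℝ)+k.2))) := by
          have := Real.add_one_le_exp (-(t * ((k.1:ℝ)+k.2)))
          linarith
        have hnn : 0 ≤ ((k.1:ℝ)+k.2) * zsummand w μh k :=
          mul_nonneg (by positivity) (zs_nonneg hw _ k)
        nlinarith
      have step2 : ∑ k ∈ F, ((k.1:ℝ)+k.2) * zsummand w μt k ≤ N :=
        Summable.sum_le_tsum F (fun k _ => mul_nonneg (by positivity) (zs_nonneg hw _ k)) hmom
      have step3 : (1/2) * ∑ k ∈ F, ((k.1:ℝ)+k.2) * zsummand w μh k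
          ≤ ∑ k ∈ F, ((k.1:ℝ)+k.2) * zsummand w μt k := by
        rw [Finset.mul_sum]
        exact Finset.sum_le_sum step1
      linarith
    have hN0 : 0 < N := by
      have : 0 < Bq := by rw [hBqdef]; positivity
      linarith
    have hzt_pos : 0 < zfun w μt := zfun_pos hw hzt_s
    have hzt_le : zfun w μt ≤ Zh := by
      refine le_trans ?_ hzh_le
      refine Summable.tsum_le_tsum (fun k => ?_) hzt_s hsumh
      rw [zs_shift]
      have h9 : Real.exp (-(t * ((k.1:ℝ)+k.2))) ≤ 1 := by
        rw [Real.exp_le_one_iff]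
        have : (0:ℝ) ≤ t * ((k.1:ℝ)+k.2) := by positivity
        linarith
      exact mul_le_of_le_one_left (zs_nonneg hw μh k) h9
    -- key inequality
    have hkey : zfun w μt + t * N ≤ zfun w μh := by
      have hterm : ∀ k : ℕ × ℕ, zsummand w μt k + t * (((k.1:ℝ)+k.2) * zsummand w μt k)
          ≤ zsummand w μh k := by
        intro k
        rw [zs_shift μh t k]
        set u : ℝ := t * ((k.1:ℝ)+k.2) with hudef
        have hu0 : 0 ≤ u := by rw [hudef]; positivity
        have hE : 0 < Real.exp (-u) := Real.exp_pos _
        have hEE : Real.exp (-u) * Real.exp u = 1 := by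
          rw [← Real.exp_add]; simp
        have h1u : Real.exp (-u) * (u + 1) ≤ Real.exp (-u) * Real.exp u :=
          mul_le_mul_of_nonneg_left (Real.add_one_le_exp u) hE.le
        rw [hEE] at h1u
        have hz := zs_nonneg hw μh k
        have expand : zsummand w μh k * (Real.exp (-u) * (u + 1)) ≤ zsummand w μh k * 1 :=
          mul_le_mul_of_nonneg_left h1u hz
        calc Real.exp (-u) * zsummand w μh k
              + t * (((k.1:ℝ)+k.2) * (Real.exp (-u) * zsummand w μh k))
            = zsummand w μh k * (Real.exp (-u) * (u + 1)) := by rw [hudef]; ring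
          _ ≤ zsummand w μh k * 1 := expand
          _ = zsummand w μh k := mul_one _
      calc zfun w μt + t * N
          = ∑' k : ℕ × ℕ, (zsummand w μt k + t * (((k.1:ℝ)+k.2) * zsummand w μt k)) := by
            rw [hNdef, zfun, ← tsum_mul_left, Summable.tsum_add hzt_s (hmom.mul_left t)]
        _ ≤ zfun w μh := Summable.tsum_le_tsum hterm (hzt_s.add (hmom.mul_left t)) hsumh
    -- derive log inequality
    set x : ℝ := t * N / zfun w μt with hxdef
    have hx0 : 0 < x := by rw [hxdef]; positivity
    have hfac : zfun w μt + t * N = zfun w μt * (1 + x) := by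
      rw [hxdef]; field_simp
    have hlog : Real.log (1 + x) ≤ t * c := by
      have hpμh : Real.log (zfun w μt) + Real.log (1+x) ≤ press w μh := by
        have h5 : Real.log (zfun w μt * (1+x)) ≤ press w μh := by
          rw [← hfac]
          exact Real.log_le_log (by positivity) hkey
        rwa [Real.log_mul hzt_pos.ne' (by positivity)] at h5
      have hdd : dotR ρ μh - dotR ρ μt = t * c := by
        rw [hμtdef, hcdef]; simp [dotR]; ring
      have hft : f μt ≤ s := hles μt hμtDmu
      have hfmut : f μt = dotR ρ μt - Real.log (zfun w μt) := by simp only [hfdef, press]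
      have hfmuh : f μh = dotR ρ μh - press w μh := by simp only [hfdef]
      -- s ≤ f μh = dotR μh - press μh ≤ dotR μh - log zμt - log(1+x)
      --          = f μt + t*c - log(1+x) ≤ s + t*c - log(1+x)
      have : s ≤ s + t * c - Real.log (1+x) := by
        have e1 : s ≤ f μh := hfs
        rw [hfmuh] at e1
        have e2 : dotR ρ μh - press w μh
            ≤ dotR ρ μh - Real.log (zfun w μt) - Real.log (1+x) := by linarith
        have e3 : dotR ρ μh - Real.log (zfun w μt) - Real.log (1+x)
            = (dotR ρ μt - Real.log (zfun w μt)) + t*c - Real.log (1+x) := by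
          linarith [hdd]
        rw [← hfmut] at e3
        linarith
      linarith
    -- x is large
    have hxlow : 4*(t*c) < x := by
      clear_value x N t c Bq Zh
      have e1 : t * (Bq/2) / Zh = 4*(t*c) := by
        rw [hBqdef]; field_simp; ring
      have e2 : t * (Bq/2) / Zh < t * N / Zh :=
        (div_lt_div_iff_of_pos_right hZh).mpr (mul_lt_mul_of_pos_left hNB ht)
      have e3 : t * N / Zh ≤ x := by
        rw [hxdef]
        exact div_le_div_of_nonneg_left (by positivity) hzt_pos hzt_le
      linarith
    -- contradiction
    clear_value x t c
    rcases le_or_gt x 1 with hx1 | hx1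
    · have hA := div_le_log_one_add x hx0.le
      have hB : x/2 ≤ x/(1+x) :=
        div_le_div_of_nonneg_left hx0.le (by linarith) (by linarith)
      nlinarith
    · have hA : Real.log 2 ≤ Real.log (1+x) :=
        Real.log_le_log (by norm_num) (by linarith)
      have hB := Real.log_two_gt_d9
      nlinarith
  refine ⟨μh, hDmu, fun μ hμ => le_trans (hles μ hμ) hfs⟩
end Aux

/-- For every `ρ ∈ (0,∞)²` the supremum defining the entropy
`s(ρ) = sup_{μ ∈ D_μ} (ρ·μ - p(μ))` is attained at a unique point `μ̄ ∈ D_μ`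
(hence is finite); moreover if `ρ ∈ D_ρ = R(D_μ)` then `R(μ̄) = ρ`. -/
theorem statement9 (w : ℕ × ℕ → ℝ) (hw : ∀ k, 0 < w k) (hexp : ExpBounded w)
    (ρ : ℝ × ℝ) (h1 : 0 < ρ.1) (h2 : 0 < ρ.2) :
    ∃ μb : ℝ × ℝ,
      (μb ∈ Dmu w ∧ ∀ μ ∈ Dmu w, dotR ρ μ - press w μ ≤ dotR ρ μb - press w μb) ∧
      (∀ μ' : ℝ × ℝ,
        (μ' ∈ Dmu w ∧ ∀ μ ∈ Dmu w, dotR ρ μ - press w μ ≤ dotR ρ μ' - press w μ') →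
        μ' = μb) ∧
      (ρ ∈ Rmap w '' Dmu w → Rmap w μb = ρ) := by
  obtain ⟨μb, hμb, hmax⟩ := exists_maximizer hw hexp ρ h1 h2
  refine ⟨μb, ⟨hμb, hmax⟩, ?_, ?_⟩
  · rintro μ' ⟨hμ', hmax'⟩
    exact maximizer_unique hw hμ' hμb hmax' hmax
  · rintro ⟨μ0, hμ0, hR⟩
    have hmax0 : ∀ μ ∈ Dmu w, dotR ρ μ - press w μ ≤ dotR ρ μ0 - press w μ0 := by
      have h := maximizer_of_R_eq hw hμ0
      rw [hR] at h
      exact h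
    have heq : μ0 = μb := maximizer_unique hw hμ0 hμb hmax0 hmax
    rw [← heq, hR]
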